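/- arXiv:2312.13658 — 4 statements merged into one kernel-verified Lean document; each statement's English description precedes it below -/
import Mathlib

section
/- Theorem 1 (sufficient condition for sample-based i-IOSS): Let the system x(t+1) = f(x(t), w(t)), y(t) = h(x(t)) be i-IOSS with functions β ∈ 𝒦ℒ and γ₁, γ₂ ∈ 𝒦, let h be 𝒦-continuous, and let K be a sampling set. If there exist γ_w, γ_h ∈ 𝒦 and a finite time t* ∈ ℕ such that for any two initial conditions x₀₁, x₀₂, any two input sequences w₁, w₂, every K_i ∈ K, and all t ≥ t*, |Δh(Δx(t))| ≤ γ_h(sup_{τ∈K_i, τ<t} |Δh(Δx(τ))|) ⊕ γ_w(sup_{0≤τ<t} |Δw(τ)|), then the system is sample-based i-IOSS with respect to K. -/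
open Set Filter

noncomputable section

/-- `Vec m` is `ℝ^m` with the Euclidean norm. -/
abbrev Vec (m : ℕ) := EuclideanSpace ℝ (Fin m)

/-- A function `φ : ℝ≥0 → ℝ≥0` is of class 𝒦 (modeled on `ℝ`, restricted to `[0,∞)`):
continuous, strictly increasing and `φ 0 = 0`. -/
def IsClassK (φ : ℝ → ℝ) : Prop :=
  ContinuousOn φ (Ici 0) ∧ StrictMonoOn φ (Ici 0) ∧ φ 0 = 0

/-- A function `σ : ℕ → ℝ≥0` is of class ℒ: non-increasing with limit `0`. -/
def IsClassL (σ : ℕ → ℝ) : Prop :=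
  (∀ t, 0 ≤ σ t) ∧ Antitone σ ∧ Tendsto σ atTop (nhds 0)

/-- Class 𝒦ℒ. -/
def IsClassKL (β : ℝ → ℕ → ℝ) : Prop :=
  (∀ t, IsClassK fun s => β s t) ∧ ∀ s, 0 ≤ s → IsClassL fun t => β s t

/-- Solution map of `x(t+1) = f(x(t), w(t))`, `x(0) = x₀`. -/
def sol {n q : ℕ} (f : Vec n → Vec q → Vec n) (x0 : Vec n) (w : ℕ → Vec q) : ℕ → Vec n
  | 0 => x0
  | t + 1 => f (sol f x0 w t) (w t)

/-- `|Δx(t)|`. -/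
def nDx {n q : ℕ} (f : Vec n → Vec q → Vec n) (x01 x02 : Vec n) (w1 w2 : ℕ → Vec q)
    (t : ℕ) : ℝ :=
  ‖sol f x01 w1 t - sol f x02 w2 t‖

/-- `|Δh(Δx(t))|`. -/
def nDy {n q p : ℕ} (f : Vec n → Vec q → Vec n) (h : Vec n → Vec p)
    (x01 x02 : Vec n) (w1 w2 : ℕ → Vec q) (t : ℕ) : ℝ :=
  ‖h (sol f x01 w1 t) - h (sol f x02 w2 t)‖

/-- `|Δw(t)|`. -/
def nDw {q : ℕ} (w1 w2 : ℕ → Vec q) (t : ℕ) : ℝ := ‖w1 t - w2 t‖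

/-- `sup_{0 ≤ τ < t} g τ` (empty sup is `0` by the `Real.sSup` convention). -/
def supLt (t : ℕ) (g : ℕ → ℝ) : ℝ := sSup (g '' {τ | τ < t})

/-- `sup_{τ ∈ S, τ < t} g τ`. -/
def supMem (S : Set ℕ) (t : ℕ) (g : ℕ → ℝ) : ℝ := sSup (g '' {τ | τ ∈ S ∧ τ < t})

/-- Time-discounted max over `0 ≤ τ < t` of `β (g τ) (t - τ - 1)`. -/
def dmaxLt (t : ℕ) (g : ℕ → ℝ) (β : ℝ → ℕ → ℝ) : ℝ :=
  sSup ((fun τ => β (g τ) (t - τ - 1)) '' {τ | τ < t})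

/-- Time-discounted max over `τ ∈ S, τ < t` of `β (g τ) (t - τ - 1)`. -/
def dmaxMem (S : Set ℕ) (t : ℕ) (g : ℕ → ℝ) (β : ℝ → ℕ → ℝ) : ℝ :=
  sSup ((fun τ => β (g τ) (t - τ - 1)) '' {τ | τ ∈ S ∧ τ < t})

/-- `t^i_j = δ_i + ⋯ + δ_{i+j-1}` (the sequence `δ` is 1-based; `δ 0` is unused). -/
def sampT (δ : ℕ → ℕ) (i j : ℕ) : ℕ := ∑ r ∈ Finset.range j, δ (i + r)

/-- The sampling set `K_i = {t^i_j : j ≥ 1}`. -/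
def sampSet (δ : ℕ → ℕ) (i : ℕ) : Set ℕ := {m | ∃ j, 1 ≤ j ∧ m = sampT δ i j}

/-- The i-IOSS bound with given comparison functions. -/
def iIOSSBound {n q p : ℕ} (f : Vec n → Vec q → Vec n) (h : Vec n → Vec p)
    (β : ℝ → ℕ → ℝ) (γ1 γ2 : ℝ → ℝ) : Prop :=
  ∀ x01 x02 w1 w2 t,
    nDx f x01 x02 w1 w2 t ≤
      max (β ‖x01 - x02‖ t)
        (max (γ1 (supLt t (nDw w1 w2))) (γ2 (supLt t (nDy f h x01 x02 w1 w2))))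

/-- The sample-based i-IOSS bound w.r.t. the sampling set generated by `δ`. -/
def sampledIOSSBound {n q p : ℕ} (f : Vec n → Vec q → Vec n) (h : Vec n → Vec p)
    (δ : ℕ → ℕ) (β : ℝ → ℕ → ℝ) (γ1 γ2 : ℝ → ℝ) : Prop :=
  ∀ i, 1 ≤ i → ∀ x01 x02 w1 w2 t,
    nDx f x01 x02 w1 w2 t ≤
      max (β ‖x01 - x02‖ t)
        (max (γ1 (supLt t (nDw w1 w2)))
             (γ2 (supMem (sampSet δ i) t (nDy f h x01 x02 w1 w2))))

/-- The sample-based i-IOSS bound on an input set `W`. -/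
def sampledIOSSBoundOn {n q p : ℕ} (f : Vec n → Vec q → Vec n) (h : Vec n → Vec p)
    (W : Set (ℕ → Vec q)) (δ : ℕ → ℕ) (β : ℝ → ℕ → ℝ) (γ1 γ2 : ℝ → ℝ) : Prop :=
  ∀ i, 1 ≤ i → ∀ x01 x02, ∀ w1 ∈ W, ∀ w2 ∈ W, ∀ t,
    nDx f x01 x02 w1 w2 t ≤
      max (β ‖x01 - x02‖ t)
        (max (γ1 (supLt t (nDw w1 w2)))
             (γ2 (supMem (sampSet δ i) t (nDy f h x01 x02 w1 w2))))

/-- The sample-based time-discounted i-IOSS bound. -/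
def sampledTDBound {n q p : ℕ} (f : Vec n → Vec q → Vec n) (h : Vec n → Vec p)
    (δ : ℕ → ℕ) (βx βu βy : ℝ → ℕ → ℝ) : Prop :=
  ∀ i, 1 ≤ i → ∀ x01 x02 w1 w2 t,
    nDx f x01 x02 w1 w2 t ≤
      max (βx ‖x01 - x02‖ t)
        (max (dmaxLt t (nDw w1 w2) βu)
             (dmaxMem (sampSet δ i) t (nDy f h x01 x02 w1 w2) βy))

/-- The sample-based time-discounted i-IOSS bound on an input set `W`. -/
def sampledTDBoundOn {n q p : ℕ} (f : Vec n → Vec q → Vec n) (h : Vec n → Vec p)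
    (W : Set (ℕ → Vec q)) (δ : ℕ → ℕ) (βx βu βy : ℝ → ℕ → ℝ) : Prop :=
  ∀ i, 1 ≤ i → ∀ x01 x02, ∀ w1 ∈ W, ∀ w2 ∈ W, ∀ t,
    nDx f x01 x02 w1 w2 t ≤
      max (βx ‖x01 - x02‖ t)
        (max (dmaxLt t (nDw w1 w2) βu)
             (dmaxMem (sampSet δ i) t (nDy f h x01 x02 w1 w2) βy))

/-- `(x₀₁, x₀₂, w₁, w₂)` generates a pair of i-ISS trajectories relative to `(β, γ1, σ1)`. -/
def pairISS {n q : ℕ} (f : Vec n → Vec q → Vec n) (β : ℝ → ℕ → ℝ) (γ1 : ℝ → ℝ)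
    (σ1 : ℕ → ℝ) (x01 x02 : Vec n) (w1 w2 : ℕ → Vec q) : Prop :=
  ∀ t, nDx f x01 x02 w1 w2 t ≤
    max (β ‖x01 - x02‖ t)
      (sSup ((fun τ => γ1 (nDw w1 w2 τ) * σ1 (t - τ - 1)) '' {τ | τ < t}))


namespace T1
-- === sup lemmas ===
lemma bddLt (g : ℕ → ℝ) (t : ℕ) : BddAbove (g '' {τ | τ < t}) :=
  ((Set.finite_Iio t).image g).bddAbove

lemma bddMem (g : ℕ → ℝ) (S : Set ℕ) (t : ℕ) : BddAbove (g '' {τ | τ ∈ S ∧ τ < t}) :=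
  (((Set.finite_Iio t).subset (fun x hx => hx.2)).image g).bddAbove

lemma le_supLt {g : ℕ → ℝ} {τ t : ℕ} (h : τ < t) : g τ ≤ supLt t g :=
  le_csSup (bddLt g t) ⟨τ, h, rfl⟩

lemma supLt_le {g : ℕ → ℝ} {t : ℕ} {a : ℝ} (ha : 0 ≤ a) (h : ∀ τ < t, g τ ≤ a) :
    supLt t g ≤ a :=
  Real.sSup_le (by rintro x ⟨τ, hτ, rfl⟩; exact h τ hτ) ha

lemma supLt_nonneg {g : ℕ → ℝ} (hg : ∀ τ, 0 ≤ g τ) (t : ℕ) : 0 ≤ supLt t g := by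
  cases t with
  | zero => simp [supLt, Real.sSup_empty]
  | succ t => exact le_trans (hg t) (le_supLt (Nat.lt_succ_self t))

lemma supLt_mono {g : ℕ → ℝ} (hg : ∀ τ, 0 ≤ g τ) {t1 t2 : ℕ} (h : t1 ≤ t2) :
    supLt t1 g ≤ supLt t2 g :=
  supLt_le (supLt_nonneg hg t2) fun τ hτ => le_supLt (lt_of_lt_of_le hτ h)

lemma le_supMem {g : ℕ → ℝ} {S : Set ℕ} {τ t : ℕ} (hS : τ ∈ S) (h : τ < t) :
    g τ ≤ supMem S t g :=
  le_csSup (bddMem g S t) ⟨τ, ⟨hS, h⟩, rfl⟩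

lemma supMem_le {g : ℕ → ℝ} {S : Set ℕ} {t : ℕ} {a : ℝ} (ha : 0 ≤ a)
    (h : ∀ τ ∈ S, τ < t → g τ ≤ a) : supMem S t g ≤ a :=
  Real.sSup_le (by rintro x ⟨τ, ⟨h1, h2⟩, rfl⟩; exact h τ h1 h2) ha

lemma supMem_nonneg {g : ℕ → ℝ} (hg : ∀ τ, 0 ≤ g τ) (S : Set ℕ) (t : ℕ) :
    0 ≤ supMem S t g := by
  rcases Set.eq_empty_or_nonempty {τ | τ ∈ S ∧ τ < t} with he | ⟨τ, hτ⟩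
  · rw [supMem, he, Set.image_empty, Real.sSup_empty]
  · exact le_trans (hg τ) (le_supMem hτ.1 hτ.2)

lemma supMem_mono {g : ℕ → ℝ} (hg : ∀ τ, 0 ≤ g τ) (S : Set ℕ) {t1 t2 : ℕ} (h : t1 ≤ t2) :
    supMem S t1 g ≤ supMem S t2 g :=
  supMem_le (supMem_nonneg hg S t2) fun τ hS hτ => le_supMem hS (lt_of_lt_of_le hτ h)

-- === class K lemmas ===
lemma K_nonneg {φ : ℝ → ℝ} (hφ : IsClassK φ) {s : ℝ} (hs : 0 ≤ s) : 0 ≤ φ s := by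
  rcases eq_or_lt_of_le hs with rfl | hlt
  · exact le_of_eq hφ.2.2.symm
  · exact le_of_lt (hφ.2.2 ▸ hφ.2.1 (le_refl (0:ℝ)) (le_of_lt hlt) hlt)

lemma K_mono {φ : ℝ → ℝ} (hφ : IsClassK φ) {a b : ℝ} (ha : 0 ≤ a) (hab : a ≤ b) :
    φ a ≤ φ b :=
  hφ.2.1.monotoneOn ha (le_trans ha hab) hab

lemma K_id : IsClassK id := ⟨continuousOn_id, fun a _ b _ h => h, rfl⟩

lemma K_comp {φ ψ : ℝ → ℝ} (hφ : IsClassK φ) (hψ : IsClassK ψ) :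
    IsClassK (fun s => φ (ψ s)) := by
  have hmap : Set.MapsTo ψ (Ici 0) (Ici 0) := fun s hs => K_nonneg hψ hs
  exact ⟨hφ.1.comp hψ.1 hmap, hφ.2.1.comp hψ.2.1 hmap,
    by simp only []; rw [hψ.2.2, hφ.2.2]⟩

lemma K_max {φ ψ : ℝ → ℝ} (hφ : IsClassK φ) (hψ : IsClassK ψ) :
    IsClassK (fun s => max (φ s) (ψ s)) :=
  ⟨fun x hx => (hφ.1 x hx).max (hψ.1 x hx),
   fun a ha b hb hab => max_lt_max (hφ.2.1 ha hb hab) (hψ.2.1 ha hb hab),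
   by simp only []; rw [hφ.2.2, hψ.2.2, max_self]⟩

lemma K_add {φ ψ : ℝ → ℝ} (hφ : IsClassK φ) (hψ : IsClassK ψ) :
    IsClassK (fun s => φ s + ψ s) :=
  ⟨hφ.1.add hψ.1,
   fun a ha b hb hab => add_lt_add (hφ.2.1 ha hb hab) (hψ.2.1 ha hb hab),
   by simp only []; rw [hφ.2.2, hψ.2.2, add_zero]⟩

lemma K_mul_const {φ : ℝ → ℝ} (hφ : IsClassK φ) {c : ℝ} (hc : 0 < c) :
    IsClassK (fun s => c * φ s) :=
  ⟨continuousOn_const.mul hφ.1,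
   fun a ha b hb hab => mul_lt_mul_of_pos_left (hφ.2.1 ha hb hab) hc,
   by simp only []; rw [hφ.2.2, mul_zero]⟩

lemma K_max_le {φ : ℝ → ℝ} (hφ : IsClassK φ) {a b : ℝ} (ha : 0 ≤ a) (hb : 0 ≤ b) :
    φ (max a b) ≤ max (φ a) (φ b) := by
  rcases le_total a b with hle | hle
  · rw [max_eq_right hle]; exact le_max_right _ _
  · rw [max_eq_left hle]; exact le_max_left _ _

-- === sol shift ===
lemma sol_shift {n q : ℕ} (f : Vec n → Vec q → Vec n) (x0 : Vec n) (w : ℕ → Vec q)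
    (a : ℕ) : ∀ k, sol f x0 w (k + a) = sol f (sol f x0 w a) (fun m => w (m + a)) k := by
  intro k
  induction k with
  | zero => simp [sol]
  | succ k ih =>
      have heq : k + 1 + a = (k + a) + 1 := by omega
      rw [heq]
      show f (sol f x0 w (k + a)) (w (k + a)) = _
      rw [ih]; rfl

-- === iterated comparison functions ===
def iterK (αh γ2 b : ℝ → ℝ) : ℕ → ℝ → ℝ
  | 0 => αh
  | k + 1 => fun s =>
      max (iterK αh γ2 b k s) (αh (max (b s) (γ2 (iterK αh γ2 b k s))))

lemma iterK_mono_idx (αh γ2 b : ℝ → ℝ) {k m : ℕ} (h : k ≤ m) (s : ℝ) :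
    iterK αh γ2 b k s ≤ iterK αh γ2 b m s := by
  induction m with
  | zero => simp_all
  | succ m ih =>
      rcases Nat.lt_or_ge k (m + 1) with hk | hk
      · exact le_trans (ih (by omega)) (le_max_left _ _)
      · have : k = m + 1 := by omega
        subst this; rfl

lemma iterK_classK {αh γ2 b : ℝ → ℝ} (hαh : IsClassK αh) (hγ2 : IsClassK γ2)
    (hb : IsClassK b) : ∀ k, IsClassK (iterK αh γ2 b k)
  | 0 => hαh
  | (k+1) => K_max (iterK_classK hαh hγ2 hb k)
      (K_comp hαh (K_max hb (K_comp hγ2 (iterK_classK hαh hγ2 hb k))))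

-- === key lemma: uniform bound on sup of output differences ===
lemma key_Y {n q p : ℕ} (f : Vec n → Vec q → Vec n) (h : Vec n → Vec p)
    (β : ℝ → ℕ → ℝ) (γ1 γ2 : ℝ → ℝ) (hβ : IsClassKL β) (hγ1 : IsClassK γ1)
    (hγ2 : IsClassK γ2) (hiIOSS : iIOSSBound f h β γ1 γ2)
    (αh : ℝ → ℝ) (hαh : IsClassK αh)
    (hKcont : ∀ x1 x2 : Vec n, ‖h x1 - h x2‖ ≤ αh ‖x1 - x2‖)
    (x01 x02 : Vec n) (w1 w2 : ℕ → Vec q) :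
    ∀ τ, supLt τ (nDy f h x01 x02 w1 w2) ≤
      max (iterK αh γ2 (fun r => β r 0) τ ‖x01 - x02‖)
          (iterK αh γ2 γ1 τ (supLt τ (nDw w1 w2))) := by
  have hs : (0:ℝ) ≤ ‖x01 - x02‖ := norm_nonneg _
  have hwnn : ∀ ρ, 0 ≤ nDw w1 w2 ρ := fun ρ => norm_nonneg _
  have hynn : ∀ ρ, 0 ≤ nDy f h x01 x02 w1 w2 ρ := fun ρ => norm_nonneg _
  have hbK : IsClassK (fun r => β r 0) := hβ.1 0
  have hΦK := iterK_classK hαh hγ2 hbK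
  have hΨK := iterK_classK hαh hγ2 hγ1
  intro τ
  induction τ with
  | zero =>
      have : supLt 0 (nDy f h x01 x02 w1 w2) = 0 := by
        simp [supLt, Real.sSup_empty]
      rw [this]
      exact le_trans (K_nonneg (hΦK 0) hs) (le_max_left _ _)
  | succ τ ih =>
      set s := ‖x01 - x02‖
      set uτ := supLt τ (nDw w1 w2) with huτ_def
      set u' := supLt (τ + 1) (nDw w1 w2) with hu'_def
      have huτ : 0 ≤ uτ := supLt_nonneg hwnn τ
      have hu' : 0 ≤ u' := supLt_nonneg hwnn (τ + 1)
      have huu : uτ ≤ u' := supLt_mono hwnn (Nat.le_succ τ)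
      set Φτ := iterK αh γ2 (fun r => β r 0) τ with hΦτ_def
      set Ψτ := iterK αh γ2 γ1 τ with hΨτ_def
      have hΦτnn : 0 ≤ Φτ s := K_nonneg (hΦK τ) hs
      have hΨu'nn : 0 ≤ Ψτ u' := K_nonneg (hΨK τ) hu'
      have hRHSnn : 0 ≤ max (iterK αh γ2 (fun r => β r 0) (τ+1) s)
          (iterK αh γ2 γ1 (τ+1) u') :=
        le_trans (K_nonneg (hΦK (τ+1)) hs) (le_max_left _ _)
      refine supLt_le hRHSnn fun ρ hρ => ?_
      have hcase : ρ < τ ∨ ρ = τ := by omega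
      rcases hcase with hρτ | rfl
      · refine le_trans (le_supLt hρτ) (le_trans ih (max_le_max ?_ ?_))
        · exact iterK_mono_idx _ _ _ (Nat.le_succ τ) s
        · exact le_trans (K_mono (hΨK τ) huτ huu)
            (iterK_mono_idx _ _ _ (Nat.le_succ τ) u')
      · have h1 : nDy f h x01 x02 w1 w2 ρ ≤ αh (nDx f x01 x02 w1 w2 ρ) :=
          hKcont _ _
        have hxnn : 0 ≤ nDx f x01 x02 w1 w2 ρ := norm_nonneg _
        set Y := supLt ρ (nDy f h x01 x02 w1 w2) with hY_def
        have hYnn : 0 ≤ Y := supLt_nonneg hynn ρ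
        set A := max (β s 0) (γ2 (Φτ s)) with hA_def
        set B := max (γ1 u') (γ2 (Ψτ u')) with hB_def
        have hAnn : 0 ≤ A :=
          le_trans (K_nonneg (hβ.1 0) hs) (le_max_left _ _)
        have hBnn : 0 ≤ B :=
          le_trans (K_nonneg hγ1 hu') (le_max_left _ _)
        have hX : nDx f x01 x02 w1 w2 ρ ≤ max A B := by
          refine le_trans (hiIOSS x01 x02 w1 w2 ρ) (max_le ?_ (max_le ?_ ?_))
          · exact le_trans (le_trans ((hβ.2 s hs).2.1 (Nat.zero_le ρ))
              (le_max_left _ _)) (le_max_left _ _)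
          · exact le_trans (le_trans (K_mono hγ1 huτ huu) (le_max_left _ _))
              (le_max_right _ _)
          · have hY2 : Y ≤ max (Φτ s) (Ψτ u') :=
              le_trans ih (max_le_max (le_refl _) (K_mono (hΨK ρ) huτ huu))
            refine le_trans (le_trans (K_mono hγ2 hYnn hY2)
              (K_max_le hγ2 hΦτnn hΨu'nn)) (max_le_max ?_ ?_) <;>
              exact le_max_right _ _
        have h2 : αh (nDx f x01 x02 w1 w2 ρ) ≤ max (αh A) (αh B) :=
          le_trans (K_mono hαh hxnn hX) (K_max_le hαh hAnn hBnn)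
        refine le_trans h1 (le_trans h2 (max_le_max ?_ ?_))
        · exact le_max_right _ _
        · exact le_max_right _ _

end T1

/-- **Theorem 1** (sufficient condition for sample-based i-IOSS). -/
theorem theorem1_sufficient_sample_based_iIOSS {n q p : ℕ}
    (f : Vec n → Vec q → Vec n) (h : Vec n → Vec p)
    (β : ℝ → ℕ → ℝ) (γ1 γ2 : ℝ → ℝ)
    (hβ : IsClassKL β) (hγ1 : IsClassK γ1) (hγ2 : IsClassK γ2)
    (hiIOSS : iIOSSBound f h β γ1 γ2)
    (αh : ℝ → ℝ) (hαh : IsClassK αh)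
    (hKcont : ∀ x1 x2 : Vec n, ‖h x1 - h x2‖ ≤ αh ‖x1 - x2‖)
    (δ : ℕ → ℕ) (δmax : ℕ) (hδ : ∀ i, 1 ≤ i → δ i ≤ δmax)
    (γw γh : ℝ → ℝ) (tstar : ℕ) (hγw : IsClassK γw) (hγh : IsClassK γh)
    (hcond : ∀ (x01 x02 : Vec n) (w1 w2 : ℕ → Vec q) (i : ℕ), 1 ≤ i →
        ∀ t, tstar ≤ t →
          nDy f h x01 x02 w1 w2 t ≤
            max (γh (supMem (sampSet δ i) t (nDy f h x01 x02 w1 w2)))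
                (γw (supLt t (nDw w1 w2)))) :
    ∃ (β' : ℝ → ℕ → ℝ) (γ1' γ2' : ℝ → ℝ),
      IsClassKL β' ∧ IsClassK γ1' ∧ IsClassK γ2' ∧
        sampledIOSSBound f h δ β' γ1' γ2' := by
  have hbK : IsClassK (fun r => β r 0) := hβ.1 0
  set Φ := T1.iterK αh γ2 (fun r => β r 0) tstar with hΦ_def
  set Ψ := T1.iterK αh γ2 γ1 tstar with hΨ_def
  have hΦK : IsClassK Φ := T1.iterK_classK hαh hγ2 hbK tstar
  have hΨK : IsClassK Ψ := T1.iterK_classK hαh hγ2 hγ1 tstar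
  set ρ : ℝ → ℝ := fun r => max r (max (β r 0) (γ2 (Φ r))) with hρ_def
  set ρ' : ℝ → ℝ := fun r => max (γ1 r) (γ2 (Ψ r)) with hρ'_def
  have hρK : IsClassK ρ := T1.K_max T1.K_id (T1.K_max hbK (T1.K_comp hγ2 hΦK))
  have hρ'K : IsClassK ρ' := T1.K_max hγ1 (T1.K_comp hγ2 hΨK)
  have hρ_ge : ∀ r, r ≤ ρ r := fun r => le_max_left _ _
  have hρ_nn : ∀ r, 0 ≤ r → 0 ≤ ρ r := fun r hr => T1.K_nonneg hρK hr
  have hρ'_nn : ∀ r, 0 ≤ r → 0 ≤ ρ' r := fun r hr => T1.K_nonneg hρ'K hr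
  refine ⟨fun r t => β (ρ r) (t - tstar) + (2:ℝ)^tstar * (2⁻¹:ℝ)^t * γ2 (Φ r),
    fun r => max (max (γ1 r) (β (ρ' r) 0)) (max (γ2 (Ψ r)) (γ2 (γw r))),
    fun r => γ2 (γh r), ?_, ?_, ?_, ?_⟩
  · -- β' is class KL
    constructor
    · intro t
      exact T1.K_add (T1.K_comp (hβ.1 (t - tstar)) hρK)
        (T1.K_mul_const (T1.K_comp hγ2 hΦK) (by positivity))
    · intro r hr
      have hρr : 0 ≤ ρ r := hρ_nn r hr
      have hL := hβ.2 (ρ r) hρr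
      have hγΦ : 0 ≤ γ2 (Φ r) := T1.K_nonneg hγ2 (T1.K_nonneg hΦK hr)
      refine ⟨?_, ?_, ?_⟩
      · intro t
        exact add_nonneg (hL.1 (t - tstar))
          (mul_nonneg (by positivity) hγΦ)
      · intro a b hab
        refine add_le_add (hL.2.1 (Nat.sub_le_sub_right hab tstar)) ?_
        have hpow : ((2:ℝ)⁻¹)^b ≤ ((2:ℝ)⁻¹)^a :=
          pow_le_pow_of_le_one (by norm_num) (by norm_num) hab
        have h2pos : (0:ℝ) ≤ (2:ℝ)^tstar := by positivity
        exact mul_le_mul_of_nonneg_right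
          (mul_le_mul_of_nonneg_left hpow h2pos) hγΦ
      · have ht1 : Tendsto (fun t : ℕ => t - tstar) atTop atTop :=
          tendsto_atTop_atTop.mpr fun b => ⟨b + tstar, fun a ha => by omega⟩
        have hT1 : Tendsto (fun t : ℕ => β (ρ r) (t - tstar)) atTop (nhds 0) :=
          hL.2.2.comp ht1
        have hgeo : Tendsto (fun t : ℕ => ((2:ℝ)⁻¹)^t) atTop (nhds 0) :=
          tendsto_pow_atTop_nhds_zero_of_lt_one (by norm_num) (by norm_num)
        have hT2 : Tendsto (fun t : ℕ => (2:ℝ)^tstar * (2⁻¹:ℝ)^t * γ2 (Φ r))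
            atTop (nhds 0) := by
          have := (hgeo.const_mul ((2:ℝ)^tstar)).mul_const (γ2 (Φ r))
          simpa using this
        simpa using hT1.add hT2
  · -- γ1' is class K
    exact T1.K_max (T1.K_max hγ1 (T1.K_comp (hβ.1 0) hρ'K))
      (T1.K_max (T1.K_comp hγ2 hΨK) (T1.K_comp hγ2 hγw))
  · -- γ2' is class K
    exact T1.K_comp hγ2 hγh
  · -- the sampled bound
    intro i hi x01 x02 w1 w2 t
    have hwnn : ∀ τ, 0 ≤ nDw w1 w2 τ := fun τ => norm_nonneg _
    have hynn : ∀ τ, 0 ≤ nDy f h x01 x02 w1 w2 τ := fun τ => norm_nonneg _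
    beta_reduce
    set s := ‖x01 - x02‖ with hs_def
    have hs : 0 ≤ s := norm_nonneg _
    set u := supLt t (nDw w1 w2) with hu_def
    have hu : 0 ≤ u := T1.supLt_nonneg hwnn t
    set M := supMem (sampSet δ i) t (nDy f h x01 x02 w1 w2) with hM_def
    have hM : 0 ≤ M := T1.supMem_nonneg hynn _ t
    have hkey := T1.key_Y f h β γ1 γ2 hβ hγ1 hγ2 hiIOSS αh hαh hKcont x01 x02 w1 w2
    have hnn2 : 0 ≤ (2:ℝ)^tstar * (2⁻¹:ℝ)^t * γ2 (Φ s) :=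
      mul_nonneg (by positivity) (T1.K_nonneg hγ2 (T1.K_nonneg hΦK hs))
    have hβnn : 0 ≤ β (ρ s) (t - tstar) := (hβ.2 (ρ s) (hρ_nn s hs)).1 _
    set B' := β (ρ s) (t - tstar) + (2:ℝ)^tstar * (2⁻¹:ℝ)^t * γ2 (Φ s) with hB'_def
    set G1 := max (max (γ1 u) (β (ρ' u) 0)) (max (γ2 (Ψ u)) (γ2 (γw u))) with hG1_def
    set G2 := γ2 (γh M) with hG2_def
    have le0 : B' ≤ max B' (max G1 G2) := le_max_left _ _
    have le1 : G1 ≤ max B' (max G1 G2) :=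
      le_trans (le_max_left _ _) (le_max_right _ _)
    have le2 : G2 ≤ max B' (max G1 G2) :=
      le_trans (le_max_right _ _) (le_max_right _ _)
    have hG1a : γ1 u ≤ G1 := le_trans (le_max_left _ _) (le_max_left _ _)
    have hG1b : β (ρ' u) 0 ≤ G1 := le_trans (le_max_right _ _) (le_max_left _ _)
    have hG1c : γ2 (Ψ u) ≤ G1 := le_trans (le_max_left _ _) (le_max_right _ _)
    have hG1d : γ2 (γw u) ≤ G1 := le_trans (le_max_right _ _) (le_max_right _ _)
    have hΦsnn : 0 ≤ Φ s := T1.K_nonneg hΦK hs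
    have hΨunn : 0 ≤ Ψ u := T1.K_nonneg hΨK hu
    rcases le_or_gt tstar t with hts | hts
    · -- case tstar ≤ t : restart from time tstar
      set k := t - tstar with hk_def
      have hkt : k + tstar = t := Nat.sub_add_cancel hts
      have hx_sh : ∀ m, nDx f (sol f x01 w1 tstar) (sol f x02 w2 tstar)
          (fun m' => w1 (m' + tstar)) (fun m' => w2 (m' + tstar)) m
          = nDx f x01 x02 w1 w2 (m + tstar) := by
        intro m; simp only [nDx, T1.sol_shift]
      have hy_sh : ∀ m, nDy f h (sol f x01 w1 tstar) (sol f x02 w2 tstar)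
          (fun m' => w1 (m' + tstar)) (fun m' => w2 (m' + tstar)) m
          = nDy f h x01 x02 w1 w2 (m + tstar) := by
        intro m; simp only [nDy, T1.sol_shift]
      have hmain := hiIOSS (sol f x01 w1 tstar) (sol f x02 w2 tstar)
          (fun m' => w1 (m' + tstar)) (fun m' => w2 (m' + tstar)) k
      rw [hx_sh k, hkt] at hmain
      -- bound on the state at time tstar
      have hustar : supLt tstar (nDw w1 w2) ≤ u := T1.supLt_mono hwnn hts
      have hustarnn : 0 ≤ supLt tstar (nDw w1 w2) := T1.supLt_nonneg hwnn tstar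
      have hYstarnn : 0 ≤ supLt tstar (nDy f h x01 x02 w1 w2) :=
        T1.supLt_nonneg hynn tstar
      have hYstar : supLt tstar (nDy f h x01 x02 w1 w2) ≤ max (Φ s) (Ψ u) :=
        le_trans (hkey tstar)
          (max_le_max (le_refl _) (T1.K_mono hΨK hustarnn hustar))
      have hz : nDx f x01 x02 w1 w2 tstar ≤ max (ρ s) (ρ' u) := by
        refine le_trans (hiIOSS x01 x02 w1 w2 tstar) (max_le ?_ (max_le ?_ ?_))
        · exact le_trans (le_trans ((hβ.2 s hs).2.1 (Nat.zero_le tstar))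
            (le_trans (le_max_left _ _) (le_max_right _ _))) (le_max_left _ _)
        · exact le_trans (T1.K_mono hγ1 hustarnn hustar)
            (le_trans (le_max_left _ _) (le_max_right _ _))
        · refine le_trans (le_trans (T1.K_mono hγ2 hYstarnn hYstar)
            (T1.K_max_le hγ2 hΦsnn hΨunn)) (max_le_max ?_ ?_)
          · exact le_trans (le_max_right _ _) (le_max_right _ _)
          · exact le_max_right _ _
      have hznn : 0 ≤ nDx f x01 x02 w1 w2 tstar := norm_nonneg _
      have hzz : ‖sol f x01 w1 tstar - sol f x02 w2 tstar‖
          = nDx f x01 x02 w1 w2 tstar := rfl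
      refine le_trans hmain (max_le ?_ (max_le ?_ ?_))
      · -- β term
        rw [hzz]
        refine le_trans (T1.K_mono (hβ.1 k) hznn hz) ?_
        refine le_trans (T1.K_max_le (hβ.1 k) (hρ_nn s hs) (hρ'_nn u hu)) ?_
        refine max_le ?_ ?_
        · exact le_trans (le_add_of_nonneg_right hnn2) le0
        · exact le_trans (le_trans ((hβ.2 (ρ' u) (hρ'_nn u hu)).2.1
            (Nat.zero_le k)) hG1b) le1
      · -- γ1 term
        have hub : supLt k (nDw (fun m' => w1 (m' + tstar))
            (fun m' => w2 (m' + tstar))) ≤ u := by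
          refine T1.supLt_le hu fun τ hτ => ?_
          have hrw : nDw (fun m' => w1 (m' + tstar)) (fun m' => w2 (m' + tstar)) τ
              = nDw w1 w2 (τ + tstar) := rfl
          rw [hrw, hu_def]
          exact T1.le_supLt (by omega)
        have hubnn : 0 ≤ supLt k (nDw (fun m' => w1 (m' + tstar))
            (fun m' => w2 (m' + tstar))) :=
          T1.supLt_nonneg (fun τ => norm_nonneg _) k
        exact le_trans (T1.K_mono hγ1 hubnn hub) (le_trans hG1a le1)
      · -- γ2 term
        have hghMnn : 0 ≤ γh M := T1.K_nonneg hγh hM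
        have hgwunn : 0 ≤ γw u := T1.K_nonneg hγw hu
        have hyc : supLt k (nDy f h (sol f x01 w1 tstar) (sol f x02 w2 tstar)
            (fun m' => w1 (m' + tstar)) (fun m' => w2 (m' + tstar)))
            ≤ max (γh M) (γw u) := by
          refine T1.supLt_le (le_trans hghMnn (le_max_left _ _)) fun τ hτ => ?_
          rw [hy_sh τ]
          refine le_trans (hcond x01 x02 w1 w2 i hi (τ + tstar) (by omega))
            (max_le_max ?_ ?_)
          · rw [hM_def]
            exact T1.K_mono hγh (T1.supMem_nonneg hynn _ _)
              (T1.supMem_mono hynn _ (by omega))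
          · rw [hu_def]
            exact T1.K_mono hγw (T1.supLt_nonneg hwnn _)
              (T1.supLt_mono hwnn (by omega))
        have hycnn : 0 ≤ supLt k (nDy f h (sol f x01 w1 tstar) (sol f x02 w2 tstar)
            (fun m' => w1 (m' + tstar)) (fun m' => w2 (m' + tstar))) :=
          T1.supLt_nonneg (fun τ => norm_nonneg _) k
        refine le_trans (T1.K_mono hγ2 hycnn hyc) ?_
        refine le_trans (T1.K_max_le hγ2 hghMnn hgwunn) ?_
        exact max_le le2 (le_trans hG1d le1)
    · -- case t < tstar
      have ht0 : t - tstar = 0 := Nat.sub_eq_zero_of_le (le_of_lt hts)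
      have hC1 : (1:ℝ) ≤ (2:ℝ)^tstar * (2⁻¹:ℝ)^t := by
        have h1 : ((2:ℝ)⁻¹)^tstar ≤ ((2:ℝ)⁻¹)^t :=
          pow_le_pow_of_le_one (by norm_num) (by norm_num) (le_of_lt hts)
        have h2 : (2:ℝ)^tstar * (2⁻¹:ℝ)^tstar = 1 := by
          rw [← mul_pow]; norm_num
        nlinarith [pow_pos (by norm_num : (0:ℝ) < 2) tstar]
      have hγΦ : 0 ≤ γ2 (Φ s) := T1.K_nonneg hγ2 hΦsnn
      have h6 : γ2 (Φ s) ≤ B' := by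
        calc γ2 (Φ s) = 1 * γ2 (Φ s) := (one_mul _).symm
          _ ≤ (2:ℝ)^tstar * (2⁻¹:ℝ)^t * γ2 (Φ s) :=
              mul_le_mul_of_nonneg_right hC1 hγΦ
          _ ≤ B' := le_add_of_nonneg_left hβnn
      have h7 : β s t ≤ B' := by
        calc β s t ≤ β s 0 := (hβ.2 s hs).2.1 (Nat.zero_le t)
          _ ≤ β (ρ s) 0 := T1.K_mono (hβ.1 0) hs (hρ_ge s)
          _ = β (ρ s) (t - tstar) := by rw [ht0]
          _ ≤ B' := le_add_of_nonneg_right hnn2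
      have hYnn : 0 ≤ supLt t (nDy f h x01 x02 w1 w2) := T1.supLt_nonneg hynn t
      have hYb : supLt t (nDy f h x01 x02 w1 w2) ≤ max (Φ s) (Ψ u) := by
        refine le_trans (hkey t) (max_le_max ?_ ?_)
        · rw [hΦ_def]; exact T1.iterK_mono_idx _ _ _ (le_of_lt hts) s
        · rw [hΨ_def, hu_def]; exact T1.iterK_mono_idx _ _ _ (le_of_lt hts) _
      refine le_trans (hiIOSS x01 x02 w1 w2 t) (max_le ?_ (max_le ?_ ?_))
      · exact le_trans h7 le0
      · exact le_trans hG1a le1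
      · refine le_trans (le_trans (T1.K_mono hγ2 hYnn hYb)
          (T1.K_max_le hγ2 hΦsnn hΨunn)) ?_
        exact max_le (le_trans h6 le0) (le_trans hG1c le1)
end
end

section
/- Theorem 2 (necessary condition for sample-based i-IOSS): Let the system be sample-based i-IOSS with respect to a sampling set K, with functions β̄ ∈ 𝒦ℒ and γ̄₁, γ̄₂ ∈ 𝒦, and let h be 𝒦-continuous with α_h ∈ 𝒦. Let W ⊆ (ℝ^q)^ℕ, σ₁ ∈ ℒ, and let Ψ be the set of quadruples (x₀₁, x₀₂, w₁, w₂) with w₁, w₂ ∈ W that do not generate a pair of i-ISS trajectories relative to (β̄, γ̄₁, σ₁). Suppose Assumption 2 holds with β = β̄, i.e., there exists T_β̄ ∈ ℕ such that each element of Ψ admits a time t_ψ ≤ T_β̄ with |Δx(t_ψ)| > β̄(|Δx₀|, t_ψ). Then there exist γ_w, γ_h ∈ 𝒦 and a finite time t* ∈ ℕ (one may take γ_w(s) = α_h(2γ̄₁(s)), γ_h(s) = α_h(2γ̄₂(s)), t* = T_β̄) such that for all (x₀₁, x₀₂, w₁, w₂) ∈ Ψ, every K_i ∈ K, and all t ≥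 t*: |Δh(Δx(t))| ≤ γ_h(sup_{τ∈K_i, τ<t} |Δh(Δx(τ))|) ⊕ γ_w(sup_{0≤τ<t} |Δw(τ)|). -/
open Set Filter

noncomputable section

lemma classK_mono {φ : ℝ → ℝ} (hφ : IsClassK φ) : MonotoneOn φ (Ici 0) :=
  hφ.2.1.monotoneOn

lemma classK_nonneg {φ : ℝ → ℝ} (hφ : IsClassK φ) {s : ℝ} (hs : 0 ≤ s) : 0 ≤ φ s := by
  have := classK_mono hφ (self_mem_Ici) (hs : s ∈ Ici (0:ℝ)) hs
  simpa [hφ.2.2] using this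

lemma classK_comp {φ ψ : ℝ → ℝ} (hφ : IsClassK φ) (hψ : IsClassK ψ) :
    IsClassK (fun s => φ (ψ s)) := by
  have hmaps : MapsTo ψ (Ici 0) (Ici 0) := fun s hs => classK_nonneg hψ hs
  refine ⟨hφ.1.comp hψ.1 hmaps, ?_, by simp [hψ.2.2, hφ.2.2]⟩
  intro a ha b hb hab
  exact hφ.2.1 (hmaps ha) (hmaps hb) (hψ.2.1 ha hb hab)

lemma supLt_bdd (t : ℕ) (g : ℕ → ℝ) : BddAbove (g '' {τ | τ < t}) :=
  ((Set.finite_lt_nat t).image g).bddAbove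

lemma supMem_bdd (S : Set ℕ) (t : ℕ) (g : ℕ → ℝ) :
    BddAbove (g '' {τ | τ ∈ S ∧ τ < t}) :=
  (((Set.finite_lt_nat t).subset (fun τ hτ => hτ.2)).image g).bddAbove

lemma supLt_nonneg {g : ℕ → ℝ} (hg : ∀ τ, 0 ≤ g τ) (t : ℕ) : 0 ≤ supLt t g :=
  Real.sSup_nonneg (by rintro x ⟨τ, -, rfl⟩; exact hg τ)

lemma supMem_nonneg {g : ℕ → ℝ} (hg : ∀ τ, 0 ≤ g τ) (S : Set ℕ) (t : ℕ) :
    0 ≤ supMem S t g :=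
  Real.sSup_nonneg (by rintro x ⟨τ, -, rfl⟩; exact hg τ)

lemma supLt_mono {g : ℕ → ℝ} (hg : ∀ τ, 0 ≤ g τ) {t1 t2 : ℕ} (h : t1 ≤ t2) :
    supLt t1 g ≤ supLt t2 g := by
  refine Real.sSup_le ?_ (supLt_nonneg hg t2)
  rintro x ⟨τ, hτ, rfl⟩
  exact le_csSup (supLt_bdd t2 g) ⟨τ, lt_of_lt_of_le hτ h, rfl⟩

lemma supMem_mono {g : ℕ → ℝ} (hg : ∀ τ, 0 ≤ g τ) (S : Set ℕ) {t1 t2 : ℕ}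
    (h : t1 ≤ t2) : supMem S t1 g ≤ supMem S t2 g := by
  refine Real.sSup_le ?_ (supMem_nonneg hg S t2)
  rintro x ⟨τ, hτ, rfl⟩
  exact le_csSup (supMem_bdd S t2 g) ⟨τ, ⟨hτ.1, lt_of_lt_of_le hτ.2 h⟩, rfl⟩

/-- **Theorem 2** (necessary condition for sample-based i-IOSS). -/
theorem theorem2_necessary_sample_based_iIOSS {n q p : ℕ}
    (f : Vec n → Vec q → Vec n) (h : Vec n → Vec p)
    (δ : ℕ → ℕ) (δmax : ℕ) (hδ : ∀ i, 1 ≤ i → δ i ≤ δmax)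
    (βb : ℝ → ℕ → ℝ) (γb1 γb2 : ℝ → ℝ)
    (hβb : IsClassKL βb) (hγb1 : IsClassK γb1) (hγb2 : IsClassK γb2)
    (hsb : sampledIOSSBound f h δ βb γb1 γb2)
    (αh : ℝ → ℝ) (hαh : IsClassK αh)
    (hKcont : ∀ x1 x2 : Vec n, ‖h x1 - h x2‖ ≤ αh ‖x1 - x2‖)
    (W : Set (ℕ → Vec q)) (σ1 : ℕ → ℝ) (hσ1 : IsClassL σ1)
    (Tβ : ℕ)
    (hass2 : ∀ (x01 x02 : Vec n) (w1 w2 : ℕ → Vec q), w1 ∈ W → w2 ∈ W →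
        ¬ pairISS f βb γb1 σ1 x01 x02 w1 w2 →
        ∃ tψ ≤ Tβ, βb ‖x01 - x02‖ tψ < nDx f x01 x02 w1 w2 tψ) :
    ∃ (γw γh : ℝ → ℝ) (tstar : ℕ), IsClassK γw ∧ IsClassK γh ∧
      ∀ (x01 x02 : Vec n) (w1 w2 : ℕ → Vec q), w1 ∈ W → w2 ∈ W →
        ¬ pairISS f βb γb1 σ1 x01 x02 w1 w2 →
        ∀ i, 1 ≤ i → ∀ t, tstar ≤ t →
          nDy f h x01 x02 w1 w2 t ≤
            max (γh (supMem (sampSet δ i) t (nDy f h x01 x02 w1 w2)))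
                (γw (supLt t (nDw w1 w2))) := by
  refine ⟨fun s => αh (γb1 s), fun s => αh (γb2 s), Tβ,
    classK_comp hαh hγb1, classK_comp hαh hγb2, ?_⟩
  intro x01 x02 w1 w2 hw1 hw2 hnot i hi t ht
  obtain ⟨tψ, htψ, hlt⟩ := hass2 x01 x02 w1 w2 hw1 hw2 hnot
  have htψt : tψ ≤ t := le_trans htψ ht
  have hwnn : ∀ τ, 0 ≤ nDw w1 w2 τ := fun τ => norm_nonneg _
  have hynn : ∀ τ, 0 ≤ nDy f h x01 x02 w1 w2 τ := fun τ => norm_nonneg _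
  set A := supLt t (nDw w1 w2) with hA
  set B := supMem (sampSet δ i) t (nDy f h x01 x02 w1 w2) with hB
  have hAnn : 0 ≤ A := supLt_nonneg hwnn t
  have hBnn : 0 ≤ B := supMem_nonneg hynn (sampSet δ i) t
  set Aψ := supLt tψ (nDw w1 w2) with hAψdef
  set Bψ := supMem (sampSet δ i) tψ (nDy f h x01 x02 w1 w2) with hBψdef
  have hAψnn : 0 ≤ Aψ := supLt_nonneg hwnn tψ
  have hBψnn : 0 ≤ Bψ := supMem_nonneg hynn (sampSet δ i) tψ
  have hAle : Aψ ≤ A := supLt_mono hwnn htψt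
  have hBle : Bψ ≤ B := supMem_mono hynn (sampSet δ i) htψt
  have hxnn : (0:ℝ) ≤ ‖x01 - x02‖ := norm_nonneg _
  -- step 1: at time tψ, β is dominated by the gain terms
  have hψ := hsb i hi x01 x02 w1 w2 tψ
  have hψ' : nDx f x01 x02 w1 w2 tψ ≤ max (γb1 Aψ) (γb2 Bψ) := by
    rcases max_cases (βb ‖x01 - x02‖ tψ) (max (γb1 Aψ) (γb2 Bψ)) with ⟨heq, -⟩ | ⟨heq, -⟩
    · exact absurd (le_trans hψ (le_of_eq heq)) (not_le_of_gt hlt)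
    · exact le_trans hψ (le_of_eq heq)
  have hβstep : βb ‖x01 - x02‖ t ≤ max (γb1 A) (γb2 B) := by
    have h1 : βb ‖x01 - x02‖ t ≤ βb ‖x01 - x02‖ tψ :=
      ((hβb.2 _ hxnn).2.1) htψt
    have h2 : βb ‖x01 - x02‖ tψ ≤ max (γb1 Aψ) (γb2 Bψ) := le_of_lt (lt_of_lt_of_le hlt hψ')
    have h3 : γb1 Aψ ≤ γb1 A := classK_mono hγb1 hAψnn hAnn hAle
    have h4 : γb2 Bψ ≤ γb2 B := classK_mono hγb2 hBψnn hBnn hBle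
    exact le_trans h1 (le_trans h2 (max_le_max h3 h4))
  -- step 2: the state bound at time t
  have hx : nDx f x01 x02 w1 w2 t ≤ max (γb1 A) (γb2 B) := by
    have := hsb i hi x01 x02 w1 w2 t
    exact le_trans this (max_le hβstep le_rfl)
  -- step 3: pass through αh
  have hy : nDy f h x01 x02 w1 w2 t ≤ αh (nDx f x01 x02 w1 w2 t) := hKcont _ _
  have hxnn' : (0:ℝ) ≤ nDx f x01 x02 w1 w2 t := norm_nonneg _
  have hγ1nn : 0 ≤ γb1 A := classK_nonneg hγb1 hAnn
  have hγ2nn : 0 ≤ γb2 B := classK_nonneg hγb2 hBnn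
  have hmaxnn : (0:ℝ) ≤ max (γb1 A) (γb2 B) := le_trans hγ1nn (le_max_left _ _)
  have := classK_mono hαh hxnn' hmaxnn hx
  have hfinal : αh (max (γb1 A) (γb2 B)) ≤ max (αh (γb2 B)) (αh (γb1 A)) := by
    rcases max_cases (γb1 A) (γb2 B) with ⟨heq, -⟩ | ⟨heq, -⟩
    · rw [heq]; exact le_max_right _ _
    · rw [heq]; exact le_max_left _ _
  exact le_trans hy (le_trans this hfinal)
end
end

section
/- Time-discounted output bound from the measured outputs (equation (35) of the paper): Let K be a sampling set built from Δ = (δ₁, δ₂, …) with 1 ≤ δ_i ≤ δ_max for all i. Suppose there exist γ_w, γ_h ∈ 𝒦 and t* ∈ ℕ with t* ≥ δ_max + 1 such that for all initial conditions x₀₁, x₀₂, all input sequences w₁, w₂, every K_i ∈ K, and all t ≥ t*: |Δh(Δx(t))| ≤ γ_h(sup_{τ∈K_i, τ<t} |Δh(Δx(τ))|) ⊕ γ_w(sup_{0≤τ<t} |Δw(τ)|). Let σ : ℕ → ℝ_{>0} be non-increasing with limit 0 and define β_w(s, r) = γ_w(s)·σ(r)/σ(2t*−1) and β_h(s, r)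 = γ_h(s)·σ(r)/σ(2t*−1). Then for all initial conditions, all input sequences, every K_i ∈ K, and all t ≥ t*: |Δh(Δx(t))| ≤ max_{0≤τ<t} β_w(|Δw(τ)|, t−τ−1) ⊕ max_{τ∈K_i, τ<t} β_h(|Δh(Δx(τ))|, t−τ−1). -/
open Set Filter

noncomputable section

lemma key_arith {t tstar δmax a s τ' : ℕ} (h1 : tstar ≤ s) (h2 : s ≤ tstar + δmax - 1)
    (h3 : a + s = t) (h4 : δmax + 1 ≤ tstar) (h5 : τ' < s) :
    t - (a + τ') - 1 ≤ 2 * tstar - 1 := by omega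

lemma sol_shift {n q : ℕ} (f : Vec n → Vec q → Vec n) (x0 : Vec n) (w : ℕ → Vec q)
    (a : ℕ) : ∀ τ, sol f (sol f x0 w a) (fun τ' => w (a + τ')) τ = sol f x0 w (a + τ) := by
  intro τ
  induction τ with
  | zero => simp [sol]
  | succ τ ih => simp only [sol, ih]; rfl

lemma nDy_shift {n q p : ℕ} (f : Vec n → Vec q → Vec n) (h : Vec n → Vec p)
    (x01 x02 : Vec n) (w1 w2 : ℕ → Vec q) (a τ : ℕ) :
    nDy f h (sol f x01 w1 a) (sol f x02 w2 a)
      (fun τ' => w1 (a + τ')) (fun τ' => w2 (a + τ')) τ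
      = nDy f h x01 x02 w1 w2 (a + τ) := by
  simp [nDy, sol_shift]

lemma sampT_add (δ : ℕ → ℕ) (i j k : ℕ) :
    sampT δ i (j + k) = sampT δ i j + sampT δ (i + j) k := by
  induction k with
  | zero => simp [sampT]
  | succ k ih =>
      rw [show j + (k+1) = (j+k)+1 from rfl]
      simp only [sampT, Finset.sum_range_succ, ← Nat.add_assoc] at *
      omega

lemma le_sampT (δ : ℕ → ℕ) (δmax : ℕ) (hδ : ∀ i, 1 ≤ i → 1 ≤ δ i ∧ δ i ≤ δmax)
    {i : ℕ} (hi : 1 ≤ i) (j : ℕ) : j ≤ sampT δ i j := by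
  induction j with
  | zero => simp [sampT]
  | succ j ih =>
      have := (hδ (i + j) (by omega)).1
      simp only [sampT, Finset.sum_range_succ] at *
      omega

/-- Time-discounted output bound from the measured outputs
(equation (35) of the paper). -/
theorem td_output_bound {n q p : ℕ}
    (f : Vec n → Vec q → Vec n) (h : Vec n → Vec p)
    (δ : ℕ → ℕ) (δmax : ℕ) (hδ : ∀ i, 1 ≤ i → 1 ≤ δ i ∧ δ i ≤ δmax)
    (γw γh : ℝ → ℝ) (hγw : IsClassK γw) (hγh : IsClassK γh)
    (tstar : ℕ) (hts : δmax + 1 ≤ tstar)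
    (hcond : ∀ (x01 x02 : Vec n) (w1 w2 : ℕ → Vec q) (i : ℕ), 1 ≤ i →
        ∀ t, tstar ≤ t →
          nDy f h x01 x02 w1 w2 t ≤
            max (γh (supMem (sampSet δ i) t (nDy f h x01 x02 w1 w2)))
                (γw (supLt t (nDw w1 w2))))
    (σ : ℕ → ℝ)
    (hσ : (∀ r, 0 < σ r) ∧ Antitone σ ∧ Tendsto σ atTop (nhds 0)) :
    ∀ (x01 x02 : Vec n) (w1 w2 : ℕ → Vec q) (i : ℕ), 1 ≤ i →
      ∀ t, tstar ≤ t →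
        nDy f h x01 x02 w1 w2 t ≤
          max (dmaxLt t (nDw w1 w2) (fun s r => γw s * σ r / σ (2 * tstar - 1)))
              (dmaxMem (sampSet δ i) t (nDy f h x01 x02 w1 w2)
                (fun s r => γh s * σ r / σ (2 * tstar - 1))) := by
  intro x01 x02 w1 w2 i hi t ht
  have hσpos := hσ.1
  have hσanti := hσ.2.1
  have hδmax1 : 1 ≤ δmax := le_trans (hδ 1 le_rfl).1 (hδ 1 le_rfl).2
  -- choose the largest sampling time `a = sampT δ i j0` with `a ≤ t - tstar`
  have hex : ∃ j, t - tstar < sampT δ i (j + 1) :=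
    ⟨t - tstar, lt_of_lt_of_le (Nat.lt_succ_self _) (le_sampT δ δmax hδ hi _)⟩
  set j0 := Nat.find hex with hj0
  set a := sampT δ i j0 with ha
  have ha_le : a ≤ t - tstar := by
    rcases Nat.eq_zero_or_pos j0 with h0 | h0
    · simp [ha, h0, sampT]
    · have := Nat.find_min hex (m := j0 - 1) (by omega)
      have : ¬ (t - tstar < sampT δ i (j0 - 1 + 1)) := this
      rw [show j0 - 1 + 1 = j0 by omega] at this
      omega
  have hfind := Nat.find_spec hex
  rw [← hj0] at hfind
  have hδi : δ (i + j0) ≤ δmax := (hδ (i + j0) (by omega)).2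
  have hstep : sampT δ i (j0 + 1) = a + δ (i + j0) := by
    simp [ha, sampT, Finset.sum_range_succ]
  set s := t - a with hs
  have hat : a + s = t := by omega
  have hs_ge : tstar ≤ s := by omega
  have hs_le : s ≤ tstar + δmax - 1 := by
    rw [hstep] at hfind; omega
  -- shifted trajectories
  set x01' := sol f x01 w1 a with hx1
  set x02' := sol f x02 w2 a with hx2
  set w1' : ℕ → Vec q := fun τ' => w1 (a + τ') with hw1
  set w2' : ℕ → Vec q := fun τ' => w2 (a + τ') with hw2
  have hshiftY : ∀ τ, nDy f h x01' x02' w1' w2' τ = nDy f h x01 x02 w1 w2 (a + τ) :=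
    fun τ => nDy_shift f h x01 x02 w1 w2 a τ
  have hshiftW : ∀ τ, nDw w1' w2' τ = nDw w1 w2 (a + τ) := fun τ => rfl
  have hlt : ∀ τ', τ' < s → a + τ' < t := fun τ' hτ' => hat ▸ Nat.add_lt_add_left hτ' a
  have hs0 : 0 < s := lt_of_lt_of_le (Nat.lt_of_lt_of_le (Nat.succ_pos δmax) hts) hs_ge
  have key : ∀ τ', τ' < s → t - (a + τ') - 1 ≤ 2 * tstar - 1 :=
    fun τ' hτ' => key_arith hs_ge hs_le hat hts hτ'
  have hmain := hcond x01' x02' w1' w2' (i + j0) (by omega) s hs_ge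
  rw [hshiftY s, hat] at hmain
  refine le_trans hmain (max_le ?_ ?_)
  · -- sampled output term
    refine le_trans ?_ (le_max_right _ _)
    set S := (nDy f h x01' x02' w1' w2' '' {τ | τ ∈ sampSet δ (i + j0) ∧ τ < s}) with hS
    have hne : S.Nonempty := by
      refine ⟨nDy f h x01' x02' w1' w2' (δ (i + j0)), δ (i + j0),
        ⟨⟨1, le_rfl, ?_⟩, lt_of_le_of_lt hδi (lt_of_lt_of_le (Nat.lt_of_succ_le hts) hs_ge)⟩, rfl⟩
      simp [sampT]
    have hfin : S.Finite := by
      apply Set.Finite.image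
      exact (Set.finite_Iio s).subset (fun τ hτ => hτ.2)
    have hmem := hne.csSup_mem hfin
    obtain ⟨τ₀, ⟨⟨k, hk1, hk2⟩, hτ₀s⟩, hsupval⟩ := hmem
    have hγh_mono := hγh.2.1.monotoneOn
    have hval : supMem (sampSet δ (i + j0)) s (nDy f h x01' x02' w1' w2')
        = nDy f h x01 x02 w1 w2 (a + τ₀) := by
      rw [supMem, ← hS, ← hsupval, hshiftY]
    rw [hval]
    have hy0 : (0:ℝ) ≤ nDy f h x01 x02 w1 w2 (a + τ₀) := norm_nonneg _
    have hγ0 : (0:ℝ) ≤ γh (nDy f h x01 x02 w1 w2 (a + τ₀)) := by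
      have := hγh_mono (Set.self_mem_Ici) (Set.mem_Ici.mpr hy0) hy0
      rwa [hγh.2.2] at this
    have hfac : (1:ℝ) ≤ σ (t - (a + τ₀) - 1) / σ (2 * tstar - 1) := by
      rw [one_le_div (hσpos _)]
      exact hσanti (key τ₀ hτ₀s)
    have h1 : γh (nDy f h x01 x02 w1 w2 (a + τ₀)) ≤
        γh (nDy f h x01 x02 w1 w2 (a + τ₀)) * σ (t - (a + τ₀) - 1) / σ (2 * tstar - 1) := by
      rw [mul_div_assoc]
      exact le_mul_of_one_le_right hγ0 hfac
    refine le_trans h1 (le_csSup ?_ ?_)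
    · exact (Set.Finite.image _ ((Set.finite_Iio t).subset (fun τ hτ => hτ.2))).bddAbove
    · exact ⟨a + τ₀, ⟨⟨j0 + k, le_trans hk1 (Nat.le_add_left k j0), by rw [hk2, sampT_add]⟩,
        hlt τ₀ hτ₀s⟩, rfl⟩
  · -- input term
    refine le_trans ?_ (le_max_left _ _)
    set S := (nDw w1' w2' '' {τ | τ < s}) with hS
    have hne : S.Nonempty := ⟨nDw w1' w2' 0, 0, hs0, rfl⟩
    have hfin : S.Finite := Set.Finite.image _ (Set.finite_Iio s)
    have hmem := hne.csSup_mem hfin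
    obtain ⟨τ₀, hτ₀s, hsupval⟩ := hmem
    have hγw_mono := hγw.2.1.monotoneOn
    have hval : supLt s (nDw w1' w2') = nDw w1 w2 (a + τ₀) := by
      rw [supLt, ← hS, ← hsupval, hshiftW]
    rw [hval]
    have hy0 : (0:ℝ) ≤ nDw w1 w2 (a + τ₀) := norm_nonneg _
    have hγ0 : (0:ℝ) ≤ γw (nDw w1 w2 (a + τ₀)) := by
      have := hγw_mono (Set.self_mem_Ici) (Set.mem_Ici.mpr hy0) hy0
      rwa [hγw.2.2] at this
    have hτ₀s' : τ₀ < s := hτ₀s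
    have hfac : (1:ℝ) ≤ σ (t - (a + τ₀) - 1) / σ (2 * tstar - 1) := by
      rw [one_le_div (hσpos _)]
      exact hσanti (key τ₀ hτ₀s')
    have h1 : γw (nDw w1 w2 (a + τ₀)) ≤
        γw (nDw w1 w2 (a + τ₀)) * σ (t - (a + τ₀) - 1) / σ (2 * tstar - 1) := by
      rw [mul_div_assoc]
      exact le_mul_of_one_le_right hγ0 hfac
    refine le_trans h1 (le_csSup ?_ ?_)
    · exact (Set.Finite.image _ ((Set.finite_Iio t).subset (fun τ hτ => hτ))).bddAbove
    · exact ⟨a + τ₀, hlt τ₀ hτ₀s', rfl⟩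
end
end

section
/- Unbounded violation time for the square-root 𝒦ℒ-bound (equation (40) of the paper): Let a > 1, c ≥ 1, λ > 0, and define β(s, t) = c·√s·e^{−λt} for 0 ≤ s < 1 and β(s, t) = c·s·e^{−λt} for s ≥ 1. Then for every T ∈ ℕ there exists s₀ ∈ (0, 1) such that for all s with 0 < s ≤ s₀ and all t ∈ ℕ with t ≤ T: aᵗ·s ≤ β(s, t). Hence the time at which the trajectory difference |Δx(t)| = aᵗ·|Δx₀| of the system x(t+1) = a·x(t) first exceeds β(|Δx₀|, t) grows unboundedly as |Δx₀| → 0, and no uniform bound T_β as in Assumption 2 exists for this β. -/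
open Set Filter

noncomputable section

/-- Unbounded violation time for the square-root 𝒦ℒ-bound (equation (40) of the paper):
for every horizon `T` the bound is satisfied up to time `T` for all sufficiently small
initial differences. -/
theorem sqrt_bound_unbounded_violation_time
    (a c lam : ℝ) (ha : 1 < a) (hc : 1 ≤ c) (hlam : 0 < lam) :
    ∀ T : ℕ, ∃ s0 : ℝ, 0 < s0 ∧ s0 < 1 ∧
      ∀ s : ℝ, 0 < s → s ≤ s0 → ∀ t : ℕ, t ≤ T →
        a ^ t * s ≤
          (if s < 1 then c * Real.sqrt s * Real.exp (-lam * (t : ℝ))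
           else c * s * Real.exp (-lam * (t : ℝ))) := by
  intro T
  have ha0 : (0:ℝ) < a := lt_trans one_pos ha
  set b : ℝ := Real.exp (-lam * T) / a ^ T with hb
  have hbpos : 0 < b := div_pos (Real.exp_pos _) (pow_pos ha0 T)
  refine ⟨min (1/2) (b^2), lt_min (by norm_num) (by positivity), ?_, ?_⟩
  · exact lt_of_le_of_lt (min_le_left _ _) (by norm_num)
  · intro s hs hs0 t ht
    have hs1 : s < 1 := lt_of_le_of_lt (hs0.trans (min_le_left _ _)) (by norm_num)
    rw [if_pos hs1]
    have hsb2 : s ≤ b ^ 2 := hs0.trans (min_le_right _ _)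
    have hsqrt : Real.sqrt s ≤ b := by
      have := Real.sqrt_le_sqrt hsb2
      rwa [Real.sqrt_sq hbpos.le] at this
    have hsq : s = Real.sqrt s * Real.sqrt s := (Real.mul_self_sqrt hs.le).symm
    have h1 : a ^ t * s ≤ a ^ T * (Real.sqrt s * b) := by
      have hat : a ^ t ≤ a ^ T := pow_le_pow_right₀ ha.le ht
      have hsnn : 0 ≤ Real.sqrt s := Real.sqrt_nonneg s
      calc a ^ t * s = a ^ t * (Real.sqrt s * Real.sqrt s) := by rw [← hsq]
        _ ≤ a ^ T * (Real.sqrt s * Real.sqrt s) :=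
            mul_le_mul_of_nonneg_right hat (by positivity)
        _ ≤ a ^ T * (Real.sqrt s * b) :=
            mul_le_mul_of_nonneg_left
              (mul_le_mul_of_nonneg_left hsqrt hsnn) (by positivity)
    have h2 : a ^ T * (Real.sqrt s * b) = Real.sqrt s * Real.exp (-lam * T) := by
      rw [hb]; field_simp
    have h3 : Real.exp (-lam * T) ≤ Real.exp (-lam * t) := by
      apply Real.exp_le_exp.2
      have : (t:ℝ) ≤ T := Nat.cast_le.2 ht
      nlinarith
    calc a ^ t * s ≤ Real.sqrt s * Real.exp (-lam * T) := h1.trans_eq h2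
      _ ≤ Real.sqrt s * Real.exp (-lam * t) :=
          mul_le_mul_of_nonneg_left h3 (Real.sqrt_nonneg s)
      _ ≤ c * Real.sqrt s * Real.exp (-lam * t) := by
          have : 1 * Real.sqrt s ≤ c * Real.sqrt s :=
            mul_le_mul_of_nonneg_right hc (Real.sqrt_nonneg s)
          nlinarith [Real.exp_pos (-lam * (t:ℝ))]
end
end
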